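/- Under the outlier hypothesis testing model, if T_n < M_n/2, then for every ε > 0, the probability that the normalized coordinatewise median π̄ of the empirical types of the M_n observation sequences lies outside the ℓ∞-ball B_{ε,∞}(π) = {Q : |Q(y) − π(y)| ≤ ε for all y} is at most 2|Y|(M_n − T_n)exp(−2n(ε/(1+|Y|))²). -/

import Mathlib

open MeasureTheory ProbabilityTheory

noncomputable def medianList (l : List ℝ) : ℝ :=
  let s := l.insertionSort (· ≤ ·)
  if l.length % 2 = 1 then s.getD (l.length / 2) 0
  else (s.getD (l.length / 2 - 1) 0 + s.getD (l.length / 2) 0) / 2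

/-- Empirical type of a length-`n` sequence at symbol `y`. -/
noncomputable def empType {Y : Type*} [DecidableEq Y] (n : ℕ)
    (s : Fin n → Y) (y : Y) : ℝ :=
  (∑ ℓ, if s ℓ = y then (1 : ℝ) else 0) / n

/-- Coordinatewise median of the `M` empirical types. -/
noncomputable def medType {Y : Type*} [DecidableEq Y] (n M : ℕ)
    (samples : Fin M → Fin n → Y) (y : Y) : ℝ :=
  medianList (List.ofFn fun k => empType n (samples k) y)

/-- Normalized coordinatewise median. -/
noncomputable def medEst {Y : Type*} [Fintype Y] [DecidableEq Y] (n M : ℕ)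
    (samples : Fin M → Fin n → Y) (y : Y) : ℝ :=
  medType n M samples y / ∑ y', medType n M samples y'

section AuxHoeffding
open Real

lemma hoeffding_deriv_bound (p : ℝ) (hp0 : 0 ≤ p) (hp1 : p ≤ 1) (s : ℝ) :
    p * exp s * (1 - p) / (1 - p + p * exp s) ^ 2 ≤ 1 / 4 := by
  set e := exp s with he
  have hepos : 0 < e := exp_pos s
  have hu : 0 < 1 - p + p * e := by
    rcases lt_or_eq_of_le hp1 with h | h
    · nlinarith
    · subst h; simpa using hepos
  rw [div_le_iff₀ (by positivity)]
  nlinarith [sq_nonneg (1 - p - p * e)]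

lemma hoeffding_core (p t : ℝ) (hp0 : 0 ≤ p) (hp1 : p ≤ 1) (ht : 0 ≤ t) :
    (1 - p) * exp (-t * p) + p * exp (t * (1 - p)) ≤ exp (t ^ 2 / 8) := by
  -- u s = 1 - p + p * exp s
  set u : ℝ → ℝ := fun s => 1 - p + p * exp s with hu
  have hu1 : ∀ s, 0 ≤ s → 1 ≤ u s := by
    intro s hs
    have := exp_pos s
    have h1 : 1 ≤ exp s := one_le_exp hs
    simp only [hu]; nlinarith
  have hupos : ∀ s, 0 ≤ s → 0 < u s := fun s hs => lt_of_lt_of_le one_pos (hu1 s hs)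
  have huderiv : ∀ s, HasDerivAt u (p * exp s) s := by
    intro s
    exact ((Real.hasDerivAt_exp s).const_mul p).const_add (1 - p)
  -- ψ s = -p + p * exp s / u s  (this is φ')
  set ψ : ℝ → ℝ := fun s => -p + p * exp s / u s with hψ
  have hψ0 : ψ 0 = 0 := by simp [hψ, hu]
  have hψderiv : ∀ s ∈ Set.Icc 0 t, HasDerivAt ψ (p * exp s * (1 - p) / (u s) ^ 2) s := by
    intro s hs
    have hus := hupos s hs.1
    have hd : HasDerivAt (fun s => p * exp s / u s)
        ((p * exp s * u s - p * exp s * (p * exp s)) / (u s) ^ 2) s :=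
      ((Real.hasDerivAt_exp s).const_mul p).div (huderiv s) hus.ne'
    have : (p * exp s * u s - p * exp s * (p * exp s)) / (u s) ^ 2
        = p * exp s * (1 - p) / (u s) ^ 2 := by
      congr 1; simp only [hu]; ring
    rw [this] at hd
    simpa [hψ] using hd.const_add (-p)
  -- |ψ s| ≤ s/4 on [0,t]
  have hψle : ∀ s ∈ Set.Icc 0 t, ψ s ≤ s / 4 := by
    intro s hs
    have := Convex.norm_image_sub_le_of_norm_hasDerivWithin_le
      (f := ψ) (f' := fun s => p * exp s * (1 - p) / (u s) ^ 2) (C := 1/4)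
      (fun x hx => (hψderiv x hx).hasDerivWithinAt)
      (fun x hx => by
        have hnum : 0 ≤ p * exp x * (1 - p) := mul_nonneg (mul_nonneg hp0 (exp_pos x).le) (by linarith)
        rw [Real.norm_eq_abs, abs_of_nonneg (div_nonneg hnum (sq_nonneg _))]
        exact hoeffding_deriv_bound p hp0 hp1 x)
      (convex_Icc 0 t) (Set.left_mem_Icc.mpr ht) hs
    rw [hψ0, sub_zero, Real.norm_eq_abs] at this
    have := (abs_le.mp this).2
    calc ψ s ≤ 1/4 * ‖s - 0‖ := this
    _ = s / 4 := by rw [sub_zero, Real.norm_eq_abs, abs_of_nonneg hs.1]; ring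
  -- φ s = -p*s + log (u s); G s = s^2/8 - φ s is monotone on [0,t]
  set φ : ℝ → ℝ := fun s => -(p * s) + Real.log (u s) with hφ
  have hφderiv : ∀ s ∈ Set.Icc 0 t, HasDerivAt φ (ψ s) s := by
    intro s hs
    have hus := hupos s hs.1
    have hl : HasDerivAt (fun s => Real.log (u s)) (p * exp s / u s) s := by
      have := (huderiv s).log hus.ne'
      simpa using this
    have := ((hasDerivAt_id s).const_mul p).neg.add hl
    exact this.congr_deriv (by simp [hψ])
  set G : ℝ → ℝ := fun s => s ^ 2 / 8 - φ s with hG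
  have hGderiv : ∀ s ∈ Set.Icc 0 t, HasDerivAt G (s / 4 - ψ s) s := by
    intro s hs
    have h1 : HasDerivAt (fun s : ℝ => s ^ 2 / 8) (s / 4) s := by
      have := (hasDerivAt_pow 2 s).div_const 8
      simpa using this.congr_deriv (by ring)
    exact h1.sub (hφderiv s hs)
  have hmono : MonotoneOn G (Set.Icc 0 t) := by
    have hci : Set.Icc (0:ℝ) t ⊆ Set.Icc 0 t := le_refl _
    refine monotoneOn_of_deriv_nonneg (convex_Icc 0 t)
      (fun s hs => (hGderiv s hs).continuousAt.continuousWithinAt) ?_ ?_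
    · intro s hs
      have hs' : s ∈ Set.Icc 0 t := interior_subset hs
      exact (hGderiv s hs').differentiableAt.differentiableWithinAt
    · intro s hs
      have hs' : s ∈ Set.Icc 0 t := interior_subset hs
      rw [(hGderiv s hs').deriv]
      have := hψle s hs'
      linarith
  have hG0 : G 0 = 0 := by simp [hG, hφ, hu]
  have hGt : 0 ≤ G t := by
    rw [← hG0]
    exact hmono (Set.left_mem_Icc.mpr ht) (Set.right_mem_Icc.mpr ht) ht
  -- conclude
  have hut : 0 < u t := hupos t ht
  have key : φ t ≤ t ^ 2 / 8 := by simp only [hG] at hGt; linarith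
  have hlhs : (1 - p) * exp (-t * p) + p * exp (t * (1 - p)) = exp (φ t) := by
    rw [hφ]
    simp only
    rw [exp_add, Real.exp_log hut]
    simp only [hu]
    rw [show t * (1 - p) = -(t * p) + t by ring, exp_add, show -t*p = -(t*p) by ring]
    ring
  rw [hlhs]
  exact exp_le_exp.mpr key


-- if the i-th entry of a sorted list is < a, then at least i+1 entries are < a
lemma sorted_count_lt (s : List ℝ) (hs : s.Pairwise (· ≤ ·)) (a : ℝ) :
    ∀ i, i < s.length → s.getD i 0 < a →
      i + 1 ≤ s.countP (fun x => decide (x < a)) := by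
  induction s with
  | nil => intro i hi; simp at hi
  | cons c t ih =>
    intro i hi hlt
    rw [List.pairwise_cons] at hs
    rcases i with _ | j
    · have hc : decide (c < a) = true := decide_eq_true (by simpa using hlt)
      simp [List.countP_cons, hc]
    · simp only [List.length_cons] at hi
      have hj := ih hs.2 j (by omega) (by simpa using hlt)
      have hmem : t.getD j 0 ∈ t := by
        rw [List.getD_eq_getElem _ _ (by omega)]; exact List.getElem_mem _
      have hc : decide (c < a) = true :=
        decide_eq_true (lt_of_le_of_lt (hs.1 _ hmem) (by simpa using hlt))
      simp [List.countP_cons, hc]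
      omega

-- if the i-th entry of a sorted list is > b, then at least length - i entries are > b
lemma sorted_count_gt (s : List ℝ) (hs : s.Pairwise (· ≤ ·)) (b : ℝ) :
    ∀ i, i < s.length → b < s.getD i 0 →
      s.length - i ≤ s.countP (fun x => decide (b < x)) := by
  induction s with
  | nil => intro i hi; simp at hi
  | cons c t ih =>
    intro i hi hgt
    rw [List.pairwise_cons] at hs
    rcases i with _ | j
    · have : ∀ x ∈ c :: t, b < x := by
        intro x hx
        rcases List.mem_cons.mp hx with rfl | hx
        · simpa using hgt
        · exact lt_of_lt_of_le (by simpa using hgt) (hs.1 x hx)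
      have := List.countP_eq_length.mpr (fun x hx => decide_eq_true (this x hx))
      omega
    · simp only [List.length_cons] at hi
      have hj := ih hs.2 j (by omega) (by simpa using hgt)
      simp only [List.countP_cons, List.length_cons]
      omega

lemma countP_le_length (p : ℝ → Bool) (l : List ℝ) : l.countP p ≤ l.length :=
  List.countP_le_length

lemma countP_compl (l : List ℝ) (p : ℝ → Bool) :
    l.countP p + l.countP (fun x => !(p x)) = l.length := by
  induction l with
  | nil => simp
  | cons c t ih =>
    cases h : p c <;> simp [List.countP_cons, h] <;> omega

lemma medianList_mem_Icc {l : List ℝ} {a b : ℝ}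
    (hcount : l.length / 2 + 1 ≤ l.countP (fun x => decide (a ≤ x ∧ x ≤ b))) :
    a ≤ medianList l ∧ medianList l ≤ b := by
  have hne : l.length ≠ 0 := by
    intro h
    rw [List.length_eq_zero_iff] at h
    subst h; simp at hcount
  set s := l.insertionSort (· ≤ ·) with hsdef
  have hperm : List.Perm l s := (l.perm_insertionSort (· ≤ ·)).symm
  have hsort : s.Pairwise (· ≤ ·) := l.pairwise_insertionSort (· ≤ ·)
  have hlen : s.length = l.length := hperm.length_eq.symm
  -- counts in s
  have hcs : l.length / 2 + 1 ≤ s.countP (fun x => decide (a ≤ x ∧ x ≤ b)) := by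
    rwa [hperm.countP_eq] at hcount
  have hge : l.length / 2 + 1 ≤ s.countP (fun x => decide (a ≤ x)) :=
    le_trans hcs (List.countP_mono_left (fun x _ h => by
      simp only [decide_eq_true_eq] at h ⊢; exact h.1))
  have hle : l.length / 2 + 1 ≤ s.countP (fun x => decide (x ≤ b)) :=
    le_trans hcs (List.countP_mono_left (fun x _ h => by
      simp only [decide_eq_true_eq] at h ⊢; exact h.2))
  -- complement counts
  have hclt : s.countP (fun x => decide (x < a)) ≤ l.length - (l.length / 2 + 1) := by
    have h1 := countP_compl s (fun x => decide (a ≤ x))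
    have h2 : s.countP (fun x => !(decide (a ≤ x))) = s.countP (fun x => decide (x < a)) := by
      apply List.countP_congr; intro x _; simp [not_le]
    omega
  have hcgt : s.countP (fun x => decide (b < x)) ≤ l.length - (l.length / 2 + 1) := by
    have h1 := countP_compl s (fun x => decide (x ≤ b))
    have h2 : s.countP (fun x => !(decide (x ≤ b))) = s.countP (fun x => decide (b < x)) := by
      apply List.countP_congr; intro x _; simp [not_le]
    omega
  -- index bounds
  have hbound : ∀ i, i < s.length → l.length / 2 ≤ i → i ≤ l.length / 2 →
      a ≤ s.getD i 0 ∧ s.getD i 0 ≤ b := by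
    intro i hi h1 h2
    constructor
    · by_contra h
      push_neg at h
      have := sorted_count_lt s hsort a i hi h
      omega
    · by_contra h
      push_neg at h
      have := sorted_count_gt s hsort b i hi h
      rw [hlen] at this
      omega
  have hbound' : ∀ i, l.length % 2 = 0 → i < s.length → l.length / 2 - 1 ≤ i → i ≤ l.length / 2 →
      a ≤ s.getD i 0 ∧ s.getD i 0 ≤ b := by
    intro i hev hi h1 h2
    constructor
    · by_contra h
      push_neg at h
      have := sorted_count_lt s hsort a i hi h
      omega
    · by_contra h
      push_neg at h
      have := sorted_count_gt s hsort b i hi h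
      rw [hlen] at this
      omega
  unfold medianList
  rw [← hsdef]
  by_cases hpar : l.length % 2 = 1
  · simp only [hpar, if_true]
    exact hbound _ (by omega) le_rfl le_rfl
  · simp only [hpar, if_false]
    have hlen2 : 2 ≤ l.length := by omega
    have hA := hbound' (l.length / 2 - 1) (by omega) (by omega) le_rfl (by omega)
    have hB := hbound (l.length / 2) (by omega) le_rfl le_rfl
    constructor <;> [linarith [hA.1, hB.1]; linarith [hA.2, hB.2]]


lemma countP_ofFn {M : ℕ} (f : Fin M → ℝ) (q : ℝ → Bool) :
    (List.ofFn f).countP q = ((Finset.univ : Finset (Fin M)).filter (fun i => q (f i))).card := by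
  classical
  rw [List.ofFn_eq_map, List.countP_map]
  rw [List.countP_eq_length_filter]
  rw [Fin.univ_def]
  simp only [Finset.filter, Finset.card_mk, Multiset.filter_coe, Multiset.coe_card]
  congr 1
  apply List.filter_congr
  intro x _
  simp

lemma empType_nonneg {Y : Type*} [DecidableEq Y] (n : ℕ) (s : Fin n → Y) (y : Y) :
    0 ≤ empType n s y := by
  unfold empType
  apply div_nonneg _ (Nat.cast_nonneg n)
  apply Finset.sum_nonneg
  intro i _
  split <;> norm_num

lemma norm_stab (c ε ε' m s p : ℝ) (hc : 1 ≤ c) (hε : 0 < ε) (he' : ε' = ε / (1 + c))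
    (hm0 : 0 ≤ m) (hmlb : p - ε' ≤ m) (hmub : m ≤ p + ε') (hms : m ≤ s)
    (hs1 : 1 - c * ε' ≤ s) (hs2 : s ≤ 1 + c * ε') (hp0 : 0 ≤ p) (hp1 : p ≤ 1) :
    |m / s - p| ≤ ε := by
  have hcpos : 0 < 1 + c := by linarith
  have hε'pos : 0 < ε' := by rw [he']; positivity
  have hεε' : ε = ε' + c * ε' := by rw [he']; field_simp
  have hs0 : 0 ≤ s := le_trans hm0 hms
  rcases eq_or_lt_of_le hs0 with h0 | hspos
  · have hm : m = 0 := le_antisymm (h0 ▸ hms) hm0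
    have h1 : 1 ≤ c * ε' := by nlinarith
    rw [hm, ← h0, div_zero, zero_sub, abs_neg, abs_of_nonneg hp0]
    nlinarith
  · rw [abs_le]
    constructor
    · rcases le_or_gt p ε with h | h
      · have : 0 ≤ m / s := div_nonneg hm0 hs0
        linarith
      · have key : (p - ε) ≤ m / s := by
          rw [le_div_iff₀ hspos]
          nlinarith
        linarith
    · rcases le_or_gt 1 (p + ε) with h | h
      · have : m / s ≤ 1 := (div_le_one hspos).mpr hms
        linarith
      · have key : m / s ≤ p + ε := by
          rw [div_le_iff₀ hspos]
          nlinarith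
        linarith

lemma det_bound {Y : Type*} [Fintype Y] [Nonempty Y] [DecidableEq Y]
    (pp : Y → ℝ) (hπ0 : ∀ y, 0 ≤ pp y) (hπ1 : ∑ y, pp y = 1)
    {n M T : ℕ} (hTM : 2 * T < M) (S : Fin M → Fin n → Y)
    {ε ε' : ℝ} (hε : 0 < ε) (hε' : ε' = ε / (1 + (Fintype.card Y : ℝ)))
    (hgood : ∀ k : Fin M, T ≤ (k : ℕ) → ∀ y, |empType n (S k) y - pp y| ≤ ε') :
    ∀ y, |medEst n M S y - pp y| ≤ ε := by
  set c : ℝ := (Fintype.card Y : ℝ) with hcdef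
  have hc1 : (1 : ℝ) ≤ c := by
    have := Fintype.card_pos_iff.mpr ‹Nonempty Y›
    simp only [hcdef]
    exact_mod_cast this
  have hε'pos : 0 < ε' := by rw [hε']; positivity
  have hTltM : T < M := by omega
  -- median bounds for each y
  have hmed : ∀ y, max 0 (pp y - ε') ≤ medType n M S y ∧ medType n M S y ≤ pp y + ε' := by
    intro y
    apply medianList_mem_Icc
    rw [List.length_ofFn, countP_ofFn]
    have hsub : Finset.Ici (⟨T, hTltM⟩ : Fin M) ⊆
        (Finset.univ : Finset (Fin M)).filter
          (fun k => decide (max 0 (pp y - ε') ≤ empType n (S k) y ∧ empType n (S k) y ≤ pp y + ε')) := by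
      intro k hk
      rw [Finset.mem_Ici] at hk
      have hk' : T ≤ (k : ℕ) := hk
      have h := hgood k hk' y
      rw [abs_le] at h
      simp only [Finset.mem_filter, Finset.mem_univ, true_and, decide_eq_true_eq]
      exact ⟨max_le (empType_nonneg n (S k) y) (by linarith [h.1]), by linarith [h.2]⟩
    have hcard := Finset.card_le_card hsub
    rw [Fin.card_Ici] at hcard
    simp only [Fin.val_mk] at hcard
    omega
  set m : Y → ℝ := fun y => medType n M S y with hmdef
  have hm0 : ∀ y, 0 ≤ m y := fun y => le_trans (le_max_left _ _) (hmed y).1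
  have hmlb : ∀ y, pp y - ε' ≤ m y := fun y => le_trans (le_max_right _ _) (hmed y).1
  have hmub : ∀ y, m y ≤ pp y + ε' := fun y => (hmed y).2
  set s : ℝ := ∑ y', m y' with hsdef
  have hms : ∀ y, m y ≤ s := fun y =>
    Finset.single_le_sum (fun y' _ => hm0 y') (Finset.mem_univ y)
  have hs1 : 1 - c * ε' ≤ s := by
    have : ∑ y', (pp y' - ε') ≤ s := Finset.sum_le_sum (fun y' _ => hmlb y')
    rw [Finset.sum_sub_distrib, hπ1, Finset.sum_const, Finset.card_univ] at this
    rw [nsmul_eq_mul] at this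
    linarith
  have hs2 : s ≤ 1 + c * ε' := by
    have : s ≤ ∑ y', (pp y' + ε') := Finset.sum_le_sum (fun y' _ => hmub y')
    rw [Finset.sum_add_distrib, hπ1, Finset.sum_const, Finset.card_univ] at this
    rw [nsmul_eq_mul] at this
    linarith
  intro y
  have hp1 : pp y ≤ 1 := by
    rw [← hπ1]
    exact Finset.single_le_sum (fun y' _ => hπ0 y') (Finset.mem_univ y)
  exact norm_stab c ε ε' (m y) s (pp y) hc1 hε hε' (hm0 y) (hmlb y) (hmub y) (hms y)
    hs1 hs2 (hπ0 y) hp1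


variable {Ω : Type*} [MeasurableSpace Ω]

lemma iIndepFun_precomp {ι κ : Type*} {β : Type*} [mβ : MeasurableSpace β]
    (u : κ → ι) (hu : Function.Injective u) {Pr : Measure Ω}
    {f : ι → Ω → β} (h : iIndepFun f Pr) :
    iIndepFun (fun j => f (u j)) Pr := by
  classical
  rw [iIndepFun_iff_measure_inter_preimage_eq_mul] at h ⊢
  intro S sets hsets
  set sets' : ι → Set β := Function.extend u sets (fun _ => Set.univ) with hsets'
  have hext : ∀ j, sets' (u j) = sets j := fun j => hu.extend_apply _ _ _
  have hm : ∀ i, i ∈ S.image u → MeasurableSet (sets' i) := by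
    intro i hi
    rcases Finset.mem_image.mp hi with ⟨j, hj, rfl⟩
    rw [hext]
    exact hsets j hj
  have key := h (S.image u) hm
  have h1 : (⋂ i ∈ S.image u, f i ⁻¹' sets' i) = ⋂ j ∈ S, f (u j) ⁻¹' sets j := by
    rw [Finset.set_biInter_finset_image]
    exact Set.iInter₂_congr (fun j _ => by rw [hext])
  have h2 : (∏ i ∈ S.image u, Pr (f i ⁻¹' sets' i)) = ∏ j ∈ S, Pr (f (u j) ⁻¹' sets j) := by
    rw [Finset.prod_image (fun x _ y _ hxy => hu hxy)]
    exact Finset.prod_congr rfl (fun j _ => by rw [hext])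
  rw [h1, h2] at key
  exact key

lemma integrable_of_twoValued (Pr : Measure Ω) [IsProbabilityMeasure Pr]
    (Z : Ω → ℝ) (hZ : Measurable Z) (hr : ∀ ω, Z ω = 0 ∨ Z ω = 1) :
    Integrable Z Pr := by
  refine Integrable.mono' (integrable_const 1) hZ.aestronglyMeasurable ?_
  filter_upwards with ω
  rcases hr ω with h | h <;> simp [h]

lemma integral_twoValued (Pr : Measure Ω) [IsProbabilityMeasure Pr]
    (Z : Ω → ℝ) (hZ : Measurable Z) (hr : ∀ ω, Z ω = 0 ∨ Z ω = 1) :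
    ∫ ω, Z ω ∂Pr = (Pr {ω | Z ω = 1}).toReal := by
  have hms : MeasurableSet {ω | Z ω = 1} := hZ (measurableSet_singleton 1)
  have hind : Z = Set.indicator {ω | Z ω = 1} (fun _ => (1 : ℝ)) := by
    funext ω
    rcases hr ω with h | h
    · rw [Set.indicator_of_notMem (by simp [Set.mem_setOf_eq, h]) _, h]
    · rw [Set.indicator_of_mem (by simp [Set.mem_setOf_eq, h]) _, h]
  rw [hind, integral_indicator_const _ hms]
  simp [Measure.real]

lemma mgf_twoValued (Pr : Measure Ω) [IsProbabilityMeasure Pr]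
    (Z : Ω → ℝ) (hZ : Measurable Z) (hr : ∀ ω, Z ω = 0 ∨ Z ω = 1)
    (p t : ℝ) (hp : (Pr {ω | Z ω = 1}).toReal = p) :
    mgf (fun ω => Z ω - p) Pr t = (1 - p) * exp (-t * p) + p * exp (t * (1 - p)) := by
  have key : (fun ω => exp (t * (Z ω - p)))
      = fun ω => exp (-(t * p)) + (exp (t * (1 - p)) - exp (-(t * p))) * Z ω := by
    funext ω
    rcases hr ω with h | h
    · rw [h]; ring_nf
    · rw [h]; ring_nf
  unfold mgf
  rw [key, integral_add (integrable_const _)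
    ((integrable_of_twoValued Pr Z hZ hr).const_mul _)]
  rw [integral_const, integral_const_mul, integral_twoValued Pr Z hZ hr, hp]
  simp only [probReal_univ, measure_univ, ENNReal.toReal_one, smul_eq_mul, one_mul]
  ring_nf

lemma hoeff_one (Pr : Measure Ω) [IsProbabilityMeasure Pr] {n : ℕ} (Z : Fin n → Ω → ℝ)
    (hZm : ∀ ℓ, Measurable (Z ℓ)) (hind : iIndepFun Z Pr)
    (hr : ∀ ℓ ω, Z ℓ ω = 0 ∨ Z ℓ ω = 1) (p : ℝ) (hp0 : 0 ≤ p) (hp1 : p ≤ 1)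
    (hmean : ∀ ℓ, (Pr {ω | Z ℓ ω = 1}).toReal = p) (δ : ℝ) (hδ : 0 < δ) :
    Pr {ω | (n : ℝ) * δ ≤ (∑ ℓ, Z ℓ ω) - n * p} ≤
      ENNReal.ofReal (Real.exp (-2 * n * δ ^ 2)) := by
  set V : Fin n → Ω → ℝ := fun ℓ ω => Z ℓ ω - p with hVdef
  have hVm : ∀ ℓ, Measurable (V ℓ) := fun ℓ => (hZm ℓ).sub_const p
  have hVind : iIndepFun V Pr :=
    hind.comp (fun _ => fun x => x - p) (fun _ => measurable_id.sub_const p)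
  set t : ℝ := 4 * δ with htdef
  have ht : 0 ≤ t := by positivity
  have hint : ∀ ℓ : Fin n, Integrable (fun ω => exp (t * V ℓ ω)) Pr := by
    intro ℓ
    refine Integrable.mono' (integrable_const (exp (|t| * (1 + |p|))))
      (((hVm ℓ).const_mul t).exp).aestronglyMeasurable ?_
    filter_upwards with ω
    rw [Real.norm_eq_abs, abs_of_pos (exp_pos _), exp_le_exp]
    have hb : |V ℓ ω| ≤ 1 + |p| := by
      rcases hr ℓ ω with h | h <;> simp only [hVdef, h] <;>
        [skip; skip] <;> first
        | (rw [zero_sub, abs_neg]; linarith [abs_nonneg p])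
        | (calc |1 - p| ≤ |(1:ℝ)| + |p| := abs_sub _ _
            _ = 1 + |p| := by rw [abs_one])
    calc t * V ℓ ω ≤ |t * V ℓ ω| := le_abs_self _
      _ = |t| * |V ℓ ω| := abs_mul _ _
      _ ≤ |t| * (1 + |p|) := by
          apply mul_le_mul_of_nonneg_left hb (abs_nonneg t)
  have hintS : Integrable (fun ω => exp (t * (∑ ℓ, V ℓ) ω)) Pr :=
    hVind.integrable_exp_mul_sum hVm (fun ℓ _ => hint ℓ)
  have hev : {ω | (n : ℝ) * δ ≤ (∑ ℓ, Z ℓ ω) - n * p}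
      = {ω | (n : ℝ) * δ ≤ (∑ ℓ, V ℓ) ω} := by
    ext ω
    simp only [Set.mem_setOf_eq, Finset.sum_apply, hVdef]
    rw [Finset.sum_sub_distrib, Finset.sum_const, Finset.card_univ, Fintype.card_fin,
      nsmul_eq_mul]
  have hchern := measure_ge_le_exp_mul_mgf (μ := Pr) (X := ∑ ℓ, V ℓ) ((n : ℝ) * δ) ht hintS
  have hmgf : mgf (∑ ℓ, V ℓ) Pr t ≤ exp ((n : ℝ) * (t ^ 2 / 8)) := by
    rw [hVind.mgf_sum hVm]
    calc (∏ ℓ : Fin n, mgf (V ℓ) Pr t) ≤ ∏ _ℓ : Fin n, exp (t ^ 2 / 8) := by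
          apply Finset.prod_le_prod (fun ℓ _ => mgf_nonneg)
          intro ℓ _
          rw [show mgf (V ℓ) Pr t = mgf (fun ω => Z ℓ ω - p) Pr t from rfl,
            mgf_twoValued Pr (Z ℓ) (hZm ℓ) (hr ℓ) p t (hmean ℓ)]
          exact hoeffding_core p t hp0 hp1 ht
      _ = exp ((n : ℝ) * (t ^ 2 / 8)) := by
          rw [Finset.prod_const, Finset.card_univ, Fintype.card_fin, ← Real.exp_nat_mul]
  have hfinal : (Pr {ω | (n : ℝ) * δ ≤ (∑ ℓ, V ℓ) ω}).toReal ≤ exp (-2 * n * δ ^ 2) := by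
    calc (Pr {ω | (n : ℝ) * δ ≤ (∑ ℓ, V ℓ) ω}).toReal
        ≤ exp (-t * ((n : ℝ) * δ)) * mgf (∑ ℓ, V ℓ) Pr t := hchern
      _ ≤ exp (-t * ((n : ℝ) * δ)) * exp ((n : ℝ) * (t ^ 2 / 8)) := by
          apply mul_le_mul_of_nonneg_left hmgf (exp_pos _).le
      _ = exp (-2 * n * δ ^ 2) := by
          rw [← Real.exp_add]
          congr 1
          rw [htdef]
          ring
  rw [hev, ← ENNReal.ofReal_toReal (measure_ne_top Pr _)]
  exact ENNReal.ofReal_le_ofReal hfinal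

lemma hoeff_two (Pr : Measure Ω) [IsProbabilityMeasure Pr] {n : ℕ} (Z : Fin n → Ω → ℝ)
    (hZm : ∀ ℓ, Measurable (Z ℓ)) (hind : iIndepFun Z Pr)
    (hr : ∀ ℓ ω, Z ℓ ω = 0 ∨ Z ℓ ω = 1) (p : ℝ) (hp0 : 0 ≤ p) (hp1 : p ≤ 1)
    (hmean : ∀ ℓ, Pr {ω | Z ℓ ω = 1} = ENNReal.ofReal p) (δ : ℝ) (hδ : 0 < δ) :
    Pr {ω | (n : ℝ) * δ ≤ |(∑ ℓ, Z ℓ ω) - n * p|} ≤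
      ENNReal.ofReal (2 * Real.exp (-2 * n * δ ^ 2)) := by
  set W : Fin n → Ω → ℝ := fun ℓ ω => 1 - Z ℓ ω with hWdef
  have hWm : ∀ ℓ, Measurable (W ℓ) := fun ℓ => (measurable_const.sub (hZm ℓ))
  have hWind : iIndepFun W Pr :=
    hind.comp (fun _ => fun x => 1 - x) (fun _ => measurable_const.sub measurable_id)
  have hWr : ∀ ℓ ω, W ℓ ω = 0 ∨ W ℓ ω = 1 := by
    intro ℓ ω
    rcases hr ℓ ω with h | h <;> simp [hWdef, h]
  have hmean' : ∀ ℓ, (Pr {ω | Z ℓ ω = 1}).toReal = p := by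
    intro ℓ
    rw [hmean ℓ, ENNReal.toReal_ofReal hp0]
  have hWmean : ∀ ℓ, (Pr {ω | W ℓ ω = 1}).toReal = 1 - p := by
    intro ℓ
    have hseq : {ω | W ℓ ω = 1} = {ω | Z ℓ ω = 1}ᶜ := by
      ext ω
      simp only [Set.mem_setOf_eq, Set.mem_compl_iff, hWdef]
      rcases hr ℓ ω with h | h <;> simp [h]
    have hms : MeasurableSet {ω | Z ℓ ω = 1} := (hZm ℓ) (measurableSet_singleton 1)
    rw [hseq, measure_compl hms (measure_ne_top _ _), measure_univ, hmean ℓ]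
    rw [ENNReal.toReal_sub_of_le (by simpa [ENNReal.ofReal_le_one] using hp1) ENNReal.one_ne_top]
    simp [ENNReal.toReal_ofReal hp0]
  have hA := hoeff_one Pr Z hZm hind hr p hp0 hp1 hmean' δ hδ
  have hB := hoeff_one Pr W hWm hWind hWr (1 - p) (by linarith) (by linarith) hWmean δ hδ
  have hWsum : ∀ ω, (∑ ℓ, W ℓ ω) - (n : ℝ) * (1 - p) = (n : ℝ) * p - ∑ ℓ, Z ℓ ω := by
    intro ω
    simp only [hWdef]
    rw [Finset.sum_sub_distrib, Finset.sum_const, Finset.card_univ, Fintype.card_fin,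
      nsmul_eq_mul]
    ring
  have hsub : {ω | (n : ℝ) * δ ≤ |(∑ ℓ, Z ℓ ω) - n * p|} ⊆
      {ω | (n : ℝ) * δ ≤ (∑ ℓ, Z ℓ ω) - n * p} ∪
      {ω | (n : ℝ) * δ ≤ (∑ ℓ, W ℓ ω) - n * (1 - p)} := by
    intro ω hω
    simp only [Set.mem_setOf_eq] at hω
    rcases le_abs.mp hω with h | h
    · left; exact h
    · right
      simp only [Set.mem_setOf_eq, hWsum ω]
      linarith
  calc Pr {ω | (n : ℝ) * δ ≤ |(∑ ℓ, Z ℓ ω) - n * p|}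
      ≤ Pr ({ω | (n : ℝ) * δ ≤ (∑ ℓ, Z ℓ ω) - n * p} ∪
          {ω | (n : ℝ) * δ ≤ (∑ ℓ, W ℓ ω) - n * (1 - p)}) := measure_mono hsub
    _ ≤ Pr {ω | (n : ℝ) * δ ≤ (∑ ℓ, Z ℓ ω) - n * p} +
        Pr {ω | (n : ℝ) * δ ≤ (∑ ℓ, W ℓ ω) - n * (1 - p)} := measure_union_le _ _
    _ ≤ ENNReal.ofReal (Real.exp (-2 * n * δ ^ 2)) +
        ENNReal.ofReal (Real.exp (-2 * n * δ ^ 2)) := add_le_add hA hB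
    _ = ENNReal.ofReal (2 * Real.exp (-2 * n * δ ^ 2)) := by
        rw [← ENNReal.ofReal_add (exp_pos _).le (exp_pos _).le]
        congr 1
        ring

end AuxHoeffding

/-- Under the outlier model with `T_n < M_n/2`, the normalized coordinatewise
median `π̄` of the empirical types lies outside the `ℓ∞`-ball `B_{ε,∞}(π)` with
probability at most `2|Y|(M−T)exp(−2n(ε/(1+|Y|))²)`. -/
theorem median_estimate_concentration
    {Ω : Type*} [MeasurableSpace Ω] (Pr : Measure Ω) [IsProbabilityMeasure Pr]
    {Y : Type*} [Fintype Y] [Nonempty Y] [DecidableEq Y] [MeasurableSpace Y]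
    [MeasurableSingletonClass Y]
    (π μ : Y → ℝ)
    (hπ0 : ∀ y, 0 ≤ π y) (hπ1 : ∑ y, π y = 1)
    (hμ0 : ∀ y, 0 ≤ μ y) (hμ1 : ∑ y, μ y = 1) (hπμ : π ≠ μ)
    (n M T : ℕ) (hn : 0 < n) (hTM : 2 * T < M)
    (X : Fin M × Fin n → Ω → Y) (hmeas : ∀ p, Measurable (X p))
    (hindep : iIndepFun X Pr)
    (hlawμ : ∀ (k : Fin M) (ℓ : Fin n) (y : Y), (k : ℕ) < T →
      Pr {ω | X (k, ℓ) ω = y} = ENNReal.ofReal (μ y))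
    (hlawπ : ∀ (k : Fin M) (ℓ : Fin n) (y : Y), T ≤ (k : ℕ) →
      Pr {ω | X (k, ℓ) ω = y} = ENNReal.ofReal (π y))
    (ε : ℝ) (hε : 0 < ε) :
    Pr {ω | ∃ y : Y, ε < |medEst n M (fun k ℓ => X (k, ℓ) ω) y - π y|} ≤
      ENNReal.ofReal (2 * (Fintype.card Y : ℝ) * ((M : ℝ) - T) *
        Real.exp (-2 * n * (ε / (1 + (Fintype.card Y : ℝ))) ^ 2)) := by
  classical
  set c : ℝ := (Fintype.card Y : ℝ) with hcdef
  set ε' : ℝ := ε / (1 + c) with hε'def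
  have hc0 : (0 : ℝ) < c := by
    simp only [hcdef]
    exact_mod_cast Fintype.card_pos_iff.mpr ‹Nonempty Y›
  have hε'pos : 0 < ε' := by rw [hε'def]; positivity
  have hTltM : T < M := by omega
  set B : ENNReal := ENNReal.ofReal (2 * Real.exp (-2 * n * ε' ^ 2)) with hBdef
  set C : Fin M → Y → Set Ω := fun k y =>
    {ω | T ≤ (k : ℕ) ∧ ε' < |empType n (fun ℓ => X (k, ℓ) ω) y - π y|} with hCdef
  -- Step 1: inclusion
  have hsub : {ω | ∃ y : Y, ε < |medEst n M (fun k ℓ => X (k, ℓ) ω) y - π y|} ⊆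
      ⋃ (k : Fin M), ⋃ (y : Y), C k y := by
    intro ω hω
    simp only [Set.mem_setOf_eq] at hω
    obtain ⟨y0, hy0⟩ := hω
    by_contra hnot
    simp only [Set.mem_iUnion, hCdef, Set.mem_setOf_eq, not_exists, not_and, not_lt] at hnot
    have := det_bound π hπ0 hπ1 hTM (fun k ℓ => X (k, ℓ) ω) hε hε'def
      (fun k hk y => hnot k y hk) y0
    linarith
  -- Step 2: per-event bound
  have hone : ∀ (k : Fin M) (y : Y), Pr (C k y) ≤ if T ≤ (k : ℕ) then B else 0 := by
    intro k y
    by_cases hk : T ≤ (k : ℕ)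
    · rw [if_pos hk]
      set Z : Fin n → Ω → ℝ := fun ℓ ω => if X (k, ℓ) ω = y then 1 else 0 with hZdef
      have hZm : ∀ ℓ, Measurable (Z ℓ) := by
        intro ℓ
        exact (measurable_of_countable (fun a : Y => if a = y then (1:ℝ) else 0)).comp
          (hmeas (k, ℓ))
      have hXind : iIndepFun (fun ℓ : Fin n => X (k, ℓ)) Pr :=
        iIndepFun_precomp (fun ℓ : Fin n => ((k, ℓ) : Fin M × Fin n))
          (fun a b hab => by simpa using congrArg Prod.snd hab) hindep
      have hZind : iIndepFun Z Pr :=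
        hXind.comp (fun _ => fun a => if a = y then (1:ℝ) else 0)
          (fun _ => measurable_of_countable _)
      have hZr : ∀ ℓ ω, Z ℓ ω = 0 ∨ Z ℓ ω = 1 := by
        intro ℓ ω
        simp only [hZdef]
        split <;> simp
      have hZmean : ∀ ℓ, Pr {ω | Z ℓ ω = 1} = ENNReal.ofReal (π y) := by
        intro ℓ
        have hset : {ω | Z ℓ ω = 1} = {ω | X (k, ℓ) ω = y} := by
          ext ω
          simp only [Set.mem_setOf_eq, hZdef]
          split <;> simp_all
        rw [hset]
        exact hlawπ k ℓ y hk
      have hsub2 : C k y ⊆ {ω | (n : ℝ) * ε' ≤ |(∑ ℓ, Z ℓ ω) - n * π y|} := by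
        intro ω hω
        simp only [hCdef, Set.mem_setOf_eq] at hω
        have h2 := hω.2
        simp only [Set.mem_setOf_eq]
        have hemp : empType n (fun ℓ => X (k, ℓ) ω) y = (∑ ℓ, Z ℓ ω) / n := by
          unfold empType
          congr 1
        have hnpos : (0 : ℝ) < n := by exact_mod_cast hn
        have : |(∑ ℓ, Z ℓ ω) - n * π y| = n * |empType n (fun ℓ => X (k, ℓ) ω) y - π y| := by
          rw [hemp, ← abs_of_pos hnpos, ← abs_mul]
          congr 1
          rw [abs_of_pos hnpos, mul_sub, mul_div_assoc', mul_div_cancel_left₀ _ hnpos.ne']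
        rw [this]
        apply mul_le_mul_of_nonneg_left (le_of_lt h2) hnpos.le
      calc Pr (C k y) ≤ Pr {ω | (n : ℝ) * ε' ≤ |(∑ ℓ, Z ℓ ω) - n * π y|} :=
            measure_mono hsub2
        _ ≤ B := by
            rw [hBdef]
            exact hoeff_two Pr Z hZm hZind hZr (π y) (hπ0 y)
              (by rw [← hπ1]; exact Finset.single_le_sum (fun y' _ => hπ0 y') (Finset.mem_univ y))
              hZmean ε' hε'pos
    · rw [if_neg hk]
      have : C k y = ∅ := by
        ext ω
        simp [hCdef, hk]
      simp [this]
  -- Step 3: union bound and counting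
  have hcount : (Finset.filter (fun k : Fin M => T ≤ (k : ℕ)) Finset.univ).card = M - T := by
    have heq : Finset.filter (fun k : Fin M => T ≤ (k : ℕ)) Finset.univ
        = Finset.Ici (⟨T, hTltM⟩ : Fin M) := by
      ext k
      simp [Finset.mem_Ici, Fin.le_def]
    rw [heq, Fin.card_Ici]
  calc Pr {ω | ∃ y : Y, ε < |medEst n M (fun k ℓ => X (k, ℓ) ω) y - π y|}
      ≤ Pr (⋃ (k : Fin M), ⋃ (y : Y), C k y) := measure_mono hsub
    _ ≤ ∑' (k : Fin M), Pr (⋃ (y : Y), C k y) := measure_iUnion_le _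
    _ ≤ ∑' (k : Fin M), ∑' (y : Y), Pr (C k y) :=
        ENNReal.tsum_le_tsum (fun k => measure_iUnion_le _)
    _ = ∑ (k : Fin M), ∑ (y : Y), Pr (C k y) := by
        rw [tsum_fintype]
        exact Finset.sum_congr rfl (fun k _ => tsum_fintype _)
    _ ≤ ∑ (k : Fin M), ∑ (_y : Y), (if T ≤ (k : ℕ) then B else 0) :=
        Finset.sum_le_sum (fun k _ => Finset.sum_le_sum (fun y _ => hone k y))
    _ = ∑ (k : Fin M), (if T ≤ (k : ℕ) then (Fintype.card Y : ENNReal) * B else 0) := by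
        refine Finset.sum_congr rfl (fun k _ => ?_)
        rw [Finset.sum_const, Finset.card_univ, nsmul_eq_mul]
        split <;> simp
    _ = ((M - T : ℕ) : ENNReal) * ((Fintype.card Y : ENNReal) * B) := by
        rw [Finset.sum_ite, Finset.sum_const, Finset.sum_const_zero, add_zero, hcount,
          nsmul_eq_mul]
    _ ≤ ENNReal.ofReal (2 * c * ((M : ℝ) - T) * Real.exp (-2 * n * ε' ^ 2)) := by
        rw [hBdef]
        rw [← ENNReal.ofReal_natCast (M - T), ← ENNReal.ofReal_natCast (Fintype.card Y)]
        rw [← ENNReal.ofReal_mul (by positivity), ← ENNReal.ofReal_mul (Nat.cast_nonneg _)]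
        apply ENNReal.ofReal_le_ofReal
        rw [Nat.cast_sub hTltM.le]
        rw [hcdef]
        ring_nf
        exact le_refl _
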